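/- Let A be a Banach algebra, T, S : A → A continuous linear maps, and suppose A** has the T-w*w property (for each F in A**, the map G ↦ F·T''(G) is weak*-to-weak continuous). If every T''-S''-derivation from A** into A*** is inner (A** is weakly T''-S''-amenable), then every T-S-derivation from A into A* is inner (A is weakly T-S-amenable). -/

import Mathlib

open NormedSpace ContinuousLinearMap Filter

set_option maxHeartbeats 1000000

/-- The topological dual of a seminormed space `E` (as `NormedSpace.Dual` was defined in the
older Mathlib; it has since been replaced by `StrongDual`). -/
abbrev NormedSpace.Dual (𝕜 : Type*) [NormedField 𝕜] (E : Type*) [SeminormedAddCommGroup E]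
    [NormedSpace 𝕜 E] : Type _ :=
  E →L[𝕜] 𝕜

noncomputable section

/-- The adjoint (dual map) of a continuous linear map: `dMap T φ = φ ∘ T`. -/
def dMap {E F : Type*} [NormedAddCommGroup E] [NormedSpace ℝ E]
    [NormedAddCommGroup F] [NormedSpace ℝ F] (T : E →L[ℝ] F) :
    Dual ℝ F →L[ℝ] Dual ℝ E :=
  (ContinuousLinearMap.compL ℝ E F ℝ).flip T

/-- The double adjoint of a continuous linear map. -/
def ddMap {E F : Type*} [NormedAddCommGroup E] [NormedSpace ℝ E]
    [NormedAddCommGroup F] [NormedSpace ℝ F] (T : E →L[ℝ] F) :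
    Dual ℝ (Dual ℝ E) →L[ℝ] Dual ℝ (Dual ℝ F) :=
  dMap (dMap T)

set_option synthInstance.maxHeartbeats 400000 in
/-- The (first, left) Arens extension of a bounded bilinear map `m : E × F → G` to the
biduals, via the classical three steps:
`⟨g'·e, f⟩ = ⟨g', m e f⟩`, `⟨Ψ·g', e⟩ = ⟨Ψ, g'·e⟩`, `⟨arensExt m Φ Ψ, g'⟩ = ⟨Φ, Ψ·g'⟩`. -/
def arensExt {E F G : Type*} [NormedAddCommGroup E] [NormedSpace ℝ E]
    [NormedAddCommGroup F] [NormedSpace ℝ F] [NormedAddCommGroup G] [NormedSpace ℝ G]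
    (m : E →L[ℝ] F →L[ℝ] G) :
    Dual ℝ (Dual ℝ E) →L[ℝ] Dual ℝ (Dual ℝ F) →L[ℝ] Dual ℝ (Dual ℝ G) :=
  let s1 : E →L[ℝ] (Dual ℝ G →L[ℝ] Dual ℝ F) :=
    ((ContinuousLinearMap.compL ℝ F G ℝ).flip).comp m
  let s2 : Dual ℝ G →L[ℝ] (Dual ℝ (Dual ℝ F) →L[ℝ] Dual ℝ E) :=
    ((ContinuousLinearMap.compL ℝ E (Dual ℝ F) ℝ).flip).comp s1.flip
  (((ContinuousLinearMap.compL ℝ (Dual ℝ G) (Dual ℝ E) ℝ).flip).comp s2.flip).flip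

/-- The first Arens product on the bidual of a (possibly non-unital) Banach algebra:
`⟨F G, a'⟩ = ⟨F, G·a'⟩` where `⟨G·a', a⟩ = ⟨G, a'·a⟩` and `⟨a'·a, b⟩ = ⟨a', a*b⟩`. -/
def arens1 (A : Type*) [NonUnitalNormedRing A] [NormedSpace ℝ A]
    [IsScalarTower ℝ A A] [SMulCommClass ℝ A A] :
    Dual ℝ (Dual ℝ A) →L[ℝ] Dual ℝ (Dual ℝ A) →L[ℝ] Dual ℝ (Dual ℝ A) :=
  arensExt (ContinuousLinearMap.mul ℝ A)

/-- The second Arens product on the bidual of a (possibly non-unital) Banach algebra: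
`⟨F ∘ G, a'⟩ = ⟨G, a'∘F⟩` where `⟨a'∘F, a⟩ = ⟨F, a∘a'⟩` and `⟨a∘a', b⟩ = ⟨a', b*a⟩`. -/
def arens2 (A : Type*) [NonUnitalNormedRing A] [NormedSpace ℝ A]
    [IsScalarTower ℝ A A] [SMulCommClass ℝ A A] :
    Dual ℝ (Dual ℝ A) →L[ℝ] Dual ℝ (Dual ℝ A) →L[ℝ] Dual ℝ (Dual ℝ A) :=
  (arensExt ((ContinuousLinearMap.mul ℝ A).flip)).flip

/-- `f`, a map from a dual space to a normed space, is weak-star-to-weak continuous. -/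
def WstarToWeakContinuous {E F : Type*} [NormedAddCommGroup E] [NormedSpace ℝ E]
    [NormedAddCommGroup F] [NormedSpace ℝ F]
    (f : Dual ℝ E → F) : Prop :=
  Continuous fun x : WeakDual ℝ E => toWeakSpace ℝ F (f x)
variable {A : Type*} [NonUnitalNormedRing A] [NormedSpace ℝ A]
  [IsScalarTower ℝ A A] [SMulCommClass ℝ A A] [CompleteSpace A]

variable (A) in
/-- The left action of `a ∈ A` on `a' ∈ A*`: `⟨a·a', x⟩ = ⟨a', x*a⟩`. -/
def dualActL (a : A) : Dual ℝ A →L[ℝ] Dual ℝ A :=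
  dMap ((ContinuousLinearMap.mul ℝ A).flip a)

variable (A) in
/-- The right action of `a ∈ A` on `a' ∈ A*`: `⟨a'·a, x⟩ = ⟨a', a*x⟩`. -/
def dualActR (a : A) : Dual ℝ A →L[ℝ] Dual ℝ A :=
  dMap (ContinuousLinearMap.mul ℝ A a)

variable (A) in
/-- The left action of `H ∈ A**` (first Arens product) on `Φ ∈ A***`:
`⟨H·Φ, G⟩ = ⟨Φ, G H⟩`. -/
def triActL (H : Dual ℝ (Dual ℝ A)) :
    Dual ℝ (Dual ℝ (Dual ℝ A)) →L[ℝ] Dual ℝ (Dual ℝ (Dual ℝ A)) :=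
  dMap (E := Dual ℝ (Dual ℝ A)) (F := Dual ℝ (Dual ℝ A)) ((arens1 A).flip H)

variable (A) in
/-- The right action of `H ∈ A**` (first Arens product) on `Φ ∈ A***`:
`⟨Φ·H, G⟩ = ⟨Φ, H G⟩`. -/
def triActR (H : Dual ℝ (Dual ℝ A)) :
    Dual ℝ (Dual ℝ (Dual ℝ A)) →L[ℝ] Dual ℝ (Dual ℝ (Dual ℝ A)) :=
  dMap (E := Dual ℝ (Dual ℝ A)) (F := Dual ℝ (Dual ℝ A)) (arens1 A H)

section Aux

local notation "ι" => NormedSpace.inclusionInDoubleDual ℝ A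
local notation "ι'" => NormedSpace.inclusionInDoubleDual ℝ (Dual ℝ A)

variable (A) in
/-- The middle step of the Arens construction: `arensMid A φ G = G·φ`,
`⟨G·φ, a⟩ = ⟨G, φ·a⟩ = G (dualActR A a φ)`. -/
def arensMid : Dual ℝ A →L[ℝ] Dual ℝ (Dual ℝ A) →L[ℝ] Dual ℝ A :=
  ((ContinuousLinearMap.compL ℝ A (Dual ℝ A) ℝ).flip).comp
    ((((ContinuousLinearMap.compL ℝ A A ℝ).flip).comp (ContinuousLinearMap.mul ℝ A)).flip)

lemma arens1_eval (F G : Dual ℝ (Dual ℝ A)) (φ : Dual ℝ A) :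
    arens1 A F G φ = F (arensMid A φ G) := rfl

lemma arensMid_eval (φ : Dual ℝ A) (G : Dual ℝ (Dual ℝ A)) (a : A) :
    arensMid A φ G a = G (dualActR A a φ) := rfl

/-- A bidual element agrees with a point of `A` on any finite set of functionals. -/
lemma exists_agree (F : Dual ℝ (Dual ℝ A)) (s : Finset (Dual ℝ A)) :
    ∃ a : A, ∀ φ ∈ s, φ a = F φ := by
  classical
  let e : A →ₗ[ℝ] (s → ℝ) :=
    { toFun := fun a i => (i : Dual ℝ A) a
      map_add' := fun x y => by funext i; simp
      map_smul' := fun c x => by funext i; simp }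
  have hw : (fun i : s => F i) ∈ LinearMap.range e := by
    rw [← Subspace.forall_mem_dualAnnihilator_apply_eq_zero_iff]
    intro ξ hξ
    have key : ∀ x : s → ℝ, ξ x = ∑ i : s, x i * ξ (fun j => if i = j then 1 else 0) := by
      intro x
      conv_lhs => rw [pi_eq_sum_univ x, map_sum]
      simp [smul_eq_mul]
    have h0 : ∀ a : A, ξ (e a) = 0 := by
      intro a
      rw [Submodule.mem_dualAnnihilator] at hξ
      exact hξ (e a) ⟨a, rfl⟩
    have hχ : (∑ i : s, ξ (fun j => if i = j then 1 else 0) • (i : Dual ℝ A)) = 0 := by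
      ext a
      have := h0 a
      rw [key (e a)] at this
      simpa [mul_comm, e] using this
    have : F (∑ i : s, ξ (fun j => if i = j then 1 else 0) • (i : Dual ℝ A)) = 0 := by
      rw [hχ, map_zero]
    rw [map_sum] at this
    rw [key (fun i : s => F i)]
    simpa [mul_comm] using this
  obtain ⟨a, ha⟩ := hw
  exact ⟨a, fun φ hφ => congrFun ha ⟨φ, hφ⟩⟩

variable (A) in
/-- The canonical inclusion of `A` into its bidual, regarded as taking values in the
weak-star topology. -/
def iotaW : A → WeakDual ℝ (Dual ℝ A) := fun a => NormedSpace.inclusionInDoubleDual ℝ A a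

/-- Goldstine-type density: the canonical image of `A` is weak-star dense in the bidual. -/
lemma denseRange_inclusion_weakDual : DenseRange (iotaW A) := by
  classical
  intro (F : WeakDual ℝ (Dual ℝ A))
  choose g hg using fun s : Finset (Dual ℝ A) => exists_agree (A := A) F s
  refine mem_closure_of_tendsto (f := fun s : Finset (Dual ℝ A) =>
      iotaW A (g s)) (b := Filter.atTop) ?_
    (Filter.Eventually.of_forall fun s => Set.mem_range_self _)
  refine (tendsto_iff_forall_eval_tendsto_topDualPairing (𝕜 := ℝ) (E := Dual ℝ A)).mpr ?_
  intro φ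
  have hev : ∀ᶠ s : Finset (Dual ℝ A) in Filter.atTop,
      topDualPairing ℝ (Dual ℝ A) (iotaW A (g s)) φ
        = topDualPairing ℝ (Dual ℝ A) F φ := by
    filter_upwards [Filter.eventually_ge_atTop ({φ} : Finset (Dual ℝ A))] with s hs
    exact hg s φ (hs (Finset.mem_singleton_self φ))
  exact Filter.Tendsto.congr' (hev.mono fun s h => h.symm) tendsto_const_nhds

end Aux

section Main

local notation "ι" => NormedSpace.inclusionInDoubleDual ℝ A

/-- The double adjoint of a `T`-`S`-derivation is a `T''`-`S''`-derivation for the first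
Arens product, provided `A**` has the `T`-`w*w` property. -/
lemma bidual_derivation (T S : A →L[ℝ] A)
    (hw : ∀ F : Dual ℝ (Dual ℝ A),
      WstarToWeakContinuous fun G : Dual ℝ (Dual ℝ A) => arens1 A F (ddMap T G))
    (D : A →L[ℝ] Dual ℝ A)
    (hD : ∀ a b : A, D (a * b) = dualActL A (T a) (D b) + dualActR A (S b) (D a))
    (F G : Dual ℝ (Dual ℝ A)) :
    ddMap D (arens1 A F G) =
      triActL A (ddMap T F) (ddMap D G) + triActR A (ddMap S G) (ddMap D F) := by
  -- Step 1: the identity with the first variable in the canonical image of `A`.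
  have step2 : ∀ (a : A) (G H : Dual ℝ (Dual ℝ A)),
      arens1 A (ι a) G (dMap D H)
        = G (dMap D (arens1 A H (ddMap T (ι a))))
          + (ι a) (dMap D (arens1 A (ddMap S G) H)) := by
    intro a G H
    have hsub : dualActR A a (dMap D H)
        = dMap D (arens1 A H (ι (T a))) + dMap S (arensMid A (D a) H) := by
      ext b
      show H (D (a * b)) = H (dualActL A (T a) (D b)) + H (dualActR A (S b) (D a))
      rw [hD, map_add]
    show G (dualActR A a (dMap D H)) = _
    rw [hsub, map_add]
    rfl
  -- Step 2: extend to arbitrary first variable by weak-star density and continuity.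
  have key : ∀ H : Dual ℝ (Dual ℝ A),
      arens1 A F G (dMap D H)
        = G (dMap D (arens1 A H (ddMap T F)))
          + F (dMap D (arens1 A (ddMap S G) H)) := by
    intro H
    have c1 : Continuous fun F' : WeakDual ℝ (Dual ℝ A) =>
        F' (arensMid A (dMap D H) G) := WeakDual.eval_continuous _
    have c2 : Continuous fun F' : WeakDual ℝ (Dual ℝ A) =>
        (ddMap D G) (arens1 A H (ddMap T F')) :=
      (WeakBilin.eval_continuous ((topDualPairing ℝ (Dual ℝ (Dual ℝ A))).flip)
        (ddMap D G)).comp (hw H)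
    have c3 : Continuous fun F' : WeakDual ℝ (Dual ℝ A) =>
        F' (dMap D (arens1 A (ddMap S G) H)) := WeakDual.eval_continuous _
    have heq := (denseRange_inclusion_weakDual (A := A)).equalizer c1 (c2.add c3)
      (funext fun a => step2 a G H)
    exact congrFun heq F
  ext H
  exact key H

end Main
/-- If `A**` has the `T`-`w*w` property and every `T''`-`S''`-derivation `A** → A***` is
inner (`A**` is weakly `T''`-`S''`-amenable), then every `T`-`S`-derivation `A → A*` is
inner (`A` is weakly `T`-`S`-amenable). -/
theorem weaklyTSamenable_of_bidual
    (T S : A →L[ℝ] A)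
    (hw : ∀ F : Dual ℝ (Dual ℝ A),
      WstarToWeakContinuous fun G : Dual ℝ (Dual ℝ A) => arens1 A F (ddMap T G))
    (hamen : ∀ 𝒟 : Dual ℝ (Dual ℝ A) →L[ℝ] Dual ℝ (Dual ℝ (Dual ℝ A)),
      (∀ F G : Dual ℝ (Dual ℝ A),
        𝒟 (arens1 A F G) =
          triActL A (ddMap T F) (𝒟 G) + triActR A (ddMap S G) (𝒟 F)) →
      ∃ Φ : Dual ℝ (Dual ℝ (Dual ℝ A)), ∀ F : Dual ℝ (Dual ℝ A),
        𝒟 F = triActL A (ddMap T F) Φ - triActR A (ddMap S F) Φ)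
    (D : A →L[ℝ] Dual ℝ A)
    (hD : ∀ a b : A, D (a * b) = dualActL A (T a) (D b) + dualActR A (S b) (D a)) :
    ∃ f : Dual ℝ A, ∀ a : A, D a = dualActL A (T a) f - dualActR A (S a) f := by
  obtain ⟨Φ, hΦ⟩ := hamen (ddMap D) (bidual_derivation T S hw D hD)
  refine ⟨Φ.comp (NormedSpace.inclusionInDoubleDual ℝ A), fun a => ?_⟩
  ext b
  exact DFunLike.congr_fun (hΦ (NormedSpace.inclusionInDoubleDual ℝ A a))
    (NormedSpace.inclusionInDoubleDual ℝ A b)
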